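/- arXiv:1608.08438 — 7 statements merged into one kernel-verified Lean document; each statement's English description precedes it below -/
import Mathlib

section
/- Let R be an integrally closed domain, k a subfield of R, k₁ a separable algebraic field extension of k, and S = k₁ ⊗_k R. If P' is a prime ideal of S whose contraction to R along the canonical map R → S, r ↦ 1 ⊗ r, is the zero ideal, then the quotient ring S/P' is an integral domain that is integrally closed in its field of fractions. -/
open TensorProduct Polynomial Pointwise

set_option maxHeartbeats 4000000
set_option synthInstance.maxHeartbeats 400000

/-- Core lemma: if `R` is an integrally closed domain with fraction field `K`,
`L = K(β)` is a finite separable extension of `K` where `β` is a root of a monic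
separable polynomial `f ∈ R[X]`, then every element of `L` integral over `R` lies
in `R[β]`. -/
theorem aux_mem_adjoin_of_isIntegral
    {R K L : Type*} [CommRing R] [IsDomain R] [IsIntegrallyClosed R]
    [Field K] [Algebra R K] [IsFractionRing R K]
    [Field L] [Algebra K L] [Algebra R L] [IsScalarTower R K L]
    [FiniteDimensional K L] [Algebra.IsSeparable K L]
    {β : L} (hβ : Algebra.adjoin K {β} = ⊤) (hβint : IsIntegral R β)
    {f : R[X]} (hmonic : f.Monic) (hsep : f.Separable) (hroot : aeval β f = 0)
    {z : L} (hz : IsIntegral R z) : z ∈ Algebra.adjoin R {β} := by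
  classical
  have hβK : IsIntegral K β := .of_finite K β
  set g : K[X] := minpoly K β with hg
  have hgsep : g.Separable := Algebra.IsSeparable.isSeparable K β
  have hgne : (aeval β (derivative g)) ≠ 0 :=
    hgsep.aeval_derivative_ne_zero (minpoly.aeval K β)
  -- z is in the dual submodule of `R[β]`
  have hadj_int : ∀ y ∈ Algebra.adjoin R {β}, IsIntegral R y := by
    intro y hy
    have : Algebra.adjoin R {β} ≤ integralClosure R L :=
      Algebra.adjoin_le (Set.singleton_subset_iff.mpr (show β ∈ integralClosure R L from hβint))
    exact this hy
  have hzmem : z ∈ (Algebra.traceForm K L).dualSubmodule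
      (Subalgebra.toSubmodule (Algebra.adjoin R {β})) := by
    intro y hy
    rw [Submodule.mem_one]
    have hyint : IsIntegral R y := hadj_int y hy
    have : IsIntegral R ((Algebra.trace K L) (z * y)) :=
      Algebra.isIntegral_trace (hz.mul hyint)
    exact IsIntegrallyClosed.isIntegral_iff.mp this
  have hdual := traceForm_dualSubmodule_adjoin R K hβ hβint
  rw [hdual] at hzmem
  have hw : (aeval β (derivative g)) • z ∈
      Subalgebra.toSubmodule (Algebra.adjoin R {β}) := by
    have h1 := Submodule.smul_mem_pointwise_smul _ (aeval β (derivative g)) _ hzmem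
    rwa [smul_smul, mul_inv_cancel₀ hgne, one_smul] at h1
  rw [Subalgebra.mem_toSubmodule] at hw
  have hwmem : aeval β (derivative g) * z ∈ Algebra.adjoin R {β} := by
    rwa [smul_eq_mul] at hw
  -- factor `f` over `K` as `g * h`, with `h` defined over `R`
  set fK : K[X] := f.map (algebraMap R K) with hfK
  have hfKroot : aeval β fK = 0 := by rw [hfK, aeval_map_algebraMap]; exact hroot
  have hdvd : g ∣ fK := minpoly.dvd K β hfKroot
  obtain ⟨q, hq⟩ := hdvd
  have hqmonic : q.Monic :=
    Polynomial.Monic.of_mul_monic_left (minpoly.monic hβK) (by rw [← hq]; exact hmonic.map _)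
  obtain ⟨q₀, hq₀⟩ := IsIntegrallyClosed.eq_map_mul_C_of_dvd K hmonic
    (show q ∣ fK from Dvd.intro_left g hq.symm)
  rw [hqmonic.leadingCoeff, map_one, mul_one] at hq₀
  -- the inverse of `f'(β)` given by separability
  obtain ⟨u, v, huv⟩ := hsep
  have hvf : aeval β v * aeval β (derivative f) = 1 := by
    have := congrArg (aeval β) huv
    simpa [hroot] using this
  -- relate `f'(β)` and `g'(β)`
  have hder : aeval β (derivative f) = aeval β (derivative g) * aeval β q := by
    have h1 : aeval β (derivative f) = aeval β (derivative fK) := by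
      rw [hfK, derivative_map, aeval_map_algebraMap]
    rw [h1, hq, derivative_mul, map_add, map_mul, map_mul, minpoly.aeval, zero_mul, add_zero]
  -- conclude
  have hzeq : z = aeval β v * aeval β q₀ * (aeval β (derivative g) * z) := by
    have haq : aeval β q₀ = aeval β q := by
      rw [← hq₀, aeval_map_algebraMap]
    rw [haq]
    calc z = (aeval β v * aeval β (derivative f)) * z := by rw [hvf, one_mul]
    _ = aeval β v * aeval β q * (aeval β (derivative g) * z) := by rw [hder]; ring
  rw [hzeq]
  have hrange : ∀ p : R[X], aeval β p ∈ Algebra.adjoin R {β} := by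
    intro p
    rw [Algebra.adjoin_singleton_eq_range_aeval]
    exact ⟨p, rfl⟩
  exact mul_mem (mul_mem (hrange v) (hrange q₀)) hwmem

/-- Let `R` be an integrally closed domain, `k` a subfield of `R`,
`k₁` a separable algebraic field extension of `k`, and `S = k₁ ⊗[k] R`.  If `P'` is a
prime ideal of `S` whose contraction to `R` along `r ↦ 1 ⊗ r` is zero, then `S ⧸ P'`
is an integrally closed domain. -/
theorem quotient_by_prime_with_zero_contraction_isIntegrallyClosed
    (k : Type*) [Field k] (R : Type*) [CommRing R] [IsDomain R] [IsIntegrallyClosed R]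
    [Algebra k R] (k₁ : Type*) [Field k₁] [Algebra k k₁] [Algebra.IsSeparable k k₁]
    (P' : Ideal (k₁ ⊗[k] R)) (hP' : P'.IsPrime)
    (hc : P'.comap (Algebra.TensorProduct.includeRight : R →ₐ[k] k₁ ⊗[k] R).toRingHom = ⊥) :
    IsDomain ((k₁ ⊗[k] R) ⧸ P') ∧ IsIntegrallyClosed ((k₁ ⊗[k] R) ⧸ P') := by
  classical
  haveI := hP'
  haveI : IsDomain ((k₁ ⊗[k] R) ⧸ P') := Ideal.Quotient.isDomain P'
  refine ⟨inferInstance, ?_⟩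
  set A := (k₁ ⊗[k] R) ⧸ P' with hAdef
  set π : (k₁ ⊗[k] R) →+* A := Ideal.Quotient.mk P' with hπdef
  set φ : R →+* A :=
    π.comp (Algebra.TensorProduct.includeRight : R →ₐ[k] k₁ ⊗[k] R).toRingHom with hφdef
  have hφ : Function.Injective φ := by
    rw [injective_iff_map_eq_zero]
    intro r hr
    have hmem : r ∈ P'.comap (Algebra.TensorProduct.includeRight : R →ₐ[k] k₁ ⊗[k] R).toRingHom := by
      rw [Ideal.mem_comap]
      exact Ideal.Quotient.eq_zero_iff_mem.mp hr
    rw [hc] at hmem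
    exact Ideal.mem_bot.mp hmem
  set χ : k₁ →+* A := π.comp (Algebra.TensorProduct.includeLeftRingHom) with hχdef
  letI : Algebra R A := φ.toAlgebra
  -- compatibility over k
  have htensor : ∀ c : k, (algebraMap k k₁ c) ⊗ₜ[k] (1 : R) = (1 : k₁) ⊗ₜ[k] (algebraMap k R c) := by
    intro c
    rw [Algebra.algebraMap_eq_smul_one, Algebra.algebraMap_eq_smul_one, TensorProduct.smul_tmul]
  have hcompatA : ∀ c : k, χ (algebraMap k k₁ c) = φ (algebraMap k R c) := by
    intro c
    show π ((algebraMap k k₁ c) ⊗ₜ[k] (1 : R)) = π ((1 : k₁) ⊗ₜ[k] (algebraMap k R c))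
    rw [htensor]
  -- every image of `k₁` in `A` is integral over `R`
  have hχint : ∀ c : k₁, IsIntegral R (χ c) := by
    intro c
    have halg : IsIntegral k c := Algebra.IsSeparable.isIntegral k c
    refine ⟨(minpoly k c).map (algebraMap k R), (minpoly.monic halg).map _, ?_⟩
    have h1 : (algebraMap R A).comp (algebraMap k R) = χ.comp (algebraMap k k₁) :=
      RingHom.ext fun e => (hcompatA e).symm
    rw [Polynomial.eval₂_map, h1, ← Polynomial.hom_eval₂]
    rw [show Polynomial.eval₂ (algebraMap k k₁) c (minpoly k c) = 0 from minpoly.aeval k c,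
      map_zero]
  -- A is integral over R
  haveI : Algebra.IsIntegral R A := by
    constructor
    intro a
    obtain ⟨s, rfl⟩ := Ideal.Quotient.mk_surjective (I := P') a
    show IsIntegral R (π s)
    induction s using TensorProduct.induction_on with
    | zero => rw [map_zero]; exact isIntegral_zero
    | tmul c r =>
      have : π (c ⊗ₜ[k] r) = χ c * φ r := by
        show π (c ⊗ₜ[k] r) = π ((c ⊗ₜ[k] (1:R))) * π (((1:k₁) ⊗ₜ[k] r))
        rw [← map_mul]
        congr 1
        rw [Algebra.TensorProduct.tmul_mul_tmul, mul_one, one_mul]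
      rw [this]
      exact (hχint c).mul (isIntegral_algebraMap (x := r))
    | add s t hs ht =>
      rw [map_add]
      exact hs.add ht
  -- set up the fraction fields
  set F := FractionRing A with hFdef
  have hRAF : ∀ r : R, algebraMap R F r = algebraMap A F (φ r) := fun r => by
    rw [IsScalarTower.algebraMap_apply R A F]; rfl
  have hRF : Function.Injective (algebraMap R F) := by
    have : (algebraMap R F : R → F) = (algebraMap A F) ∘ φ := funext hRAF
    rw [this]
    exact (IsFractionRing.injective A F).comp hφ
  set K := FractionRing R with hKdef
  letI : Algebra K F := (IsFractionRing.lift hRF).toAlgebra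
  haveI : IsScalarTower R K F := IsScalarTower.of_algebraMap_eq fun r => by
    show algebraMap R F r = IsFractionRing.lift hRF (algebraMap R K r)
    rw [IsFractionRing.lift_algebraMap]
  set ψ : k₁ →+* F := (algebraMap A F).comp χ with hψdef
  have hcompatF : ∀ c : k, ψ (algebraMap k k₁ c) = algebraMap R F (algebraMap k R c) := by
    intro c
    rw [hRAF]
    show (algebraMap A F) (χ (algebraMap k k₁ c)) = (algebraMap A F) (φ (algebraMap k R c))
    rw [hcompatA]
  set θ : (k₁ ⊗[k] R) →+* F := (algebraMap A F).comp π with hθdef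
  -- every element of the image of `S` in `F` lies in a finitely generated piece
  have hspan : ∀ s : k₁ ⊗[k] R, ∃ T : Finset k₁,
      θ s ∈ Algebra.adjoin R (ψ '' (T : Set k₁)) := by
    intro s
    induction s using TensorProduct.induction_on with
    | zero => exact ⟨∅, by rw [map_zero]; exact Subalgebra.zero_mem _⟩
    | tmul c r =>
      refine ⟨{c}, ?_⟩
      have : θ (c ⊗ₜ[k] r) = ψ c * algebraMap R F r := by
        rw [hRAF]
        show (algebraMap A F) (π (c ⊗ₜ[k] r)) = (algebraMap A F) (χ c) * (algebraMap A F) (φ r)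
        rw [← map_mul]
        congr 1
        show π (c ⊗ₜ[k] r) = π ((c ⊗ₜ[k] (1:R))) * π (((1:k₁) ⊗ₜ[k] r))
        rw [← map_mul]
        congr 1
        rw [Algebra.TensorProduct.tmul_mul_tmul, mul_one, one_mul]
      rw [this]
      refine mul_mem (Algebra.subset_adjoin ?_) (Subalgebra.algebraMap_mem _ r)
      exact ⟨c, by simp, rfl⟩
    | add s t hs ht =>
      obtain ⟨Ts, hTs⟩ := hs
      obtain ⟨Tt, hTt⟩ := ht
      refine ⟨Ts ∪ Tt, ?_⟩
      rw [map_add]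
      refine add_mem (Algebra.adjoin_mono ?_ hTs) (Algebra.adjoin_mono ?_ hTt) <;>
        · apply Set.image_mono
          intro e he
          simp only [Finset.coe_union, Set.mem_union]
          first
            | exact Or.inl he
            | exact Or.inr he
  -- now prove integral closedness
  rw [isIntegrallyClosed_iff F]
  intro x hx
  have hxR : IsIntegral R x := isIntegral_trans x hx
  obtain ⟨a, b, hb, hxeq⟩ := IsFractionRing.div_surjective (A := A) x
  obtain ⟨s, hs⟩ := Ideal.Quotient.mk_surjective (I := P') a
  obtain ⟨t, ht⟩ := Ideal.Quotient.mk_surjective (I := P') b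
  obtain ⟨Ts, hTs⟩ := hspan s
  obtain ⟨Tt, hTt⟩ := hspan t
  set T : Finset k₁ := Ts ∪ Tt with hTdef
  -- find a primitive element for the subfield generated by T
  haveI : FiniteDimensional k (IntermediateField.adjoin k (T : Set k₁)) :=
    IntermediateField.finiteDimensional_adjoin fun c _ => Algebra.IsSeparable.isIntegral k c
  haveI : Algebra.IsSeparable k (IntermediateField.adjoin k (T : Set k₁)) :=
    Algebra.isSeparable_tower_bot_of_isSeparable k _ k₁
  obtain ⟨γ, hγ⟩ := Field.exists_primitive_element k (IntermediateField.adjoin k (T : Set k₁))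
  set α : k₁ := (γ : k₁) with hαdef
  have hαint : IsIntegral k α := Algebra.IsSeparable.isIntegral k α
  -- every element of T is a polynomial in α over k
  have hpoly : ∀ c ∈ (T : Set k₁), ∃ p : Polynomial k, Polynomial.aeval α p = c := by
    intro c hcT
    have hck' : c ∈ IntermediateField.adjoin k (T : Set k₁) :=
      IntermediateField.subset_adjoin k _ hcT
    set c' : IntermediateField.adjoin k (T : Set k₁) := ⟨c, hck'⟩ with hc'def
    have hγint : IsIntegral k γ := Algebra.IsSeparable.isIntegral k γ
    have hc'mem : c' ∈ IntermediateField.adjoin k {γ} := by rw [hγ]; trivial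
    have hc'mem2 : c' ∈ (IntermediateField.adjoin k {γ}).toSubalgebra := hc'mem
    rw [IntermediateField.adjoin_simple_toSubalgebra_of_isAlgebraic hγint.isAlgebraic,
      Algebra.adjoin_singleton_eq_range_aeval] at hc'mem2
    obtain ⟨p, hp⟩ := hc'mem2
    refine ⟨p, ?_⟩
    have h2 : (Polynomial.aeval γ) p = c' := hp
    have h3 := congrArg (algebraMap (IntermediateField.adjoin k (T : Set k₁)) k₁) h2
    rw [← Polynomial.aeval_algebraMap_apply] at h3
    exact h3
  -- the generator β
  set β : F := ψ α with hβdef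
  have hβint : IsIntegral R β := by
    obtain ⟨p, hpm, hpe⟩ := hχint α
    refine ⟨p, hpm, ?_⟩
    have h2 : Polynomial.eval₂ ((algebraMap A F).comp (algebraMap R A)) (algebraMap A F (χ α)) p
        = 0 := by
      rw [← Polynomial.hom_eval₂, hpe, map_zero]
    rw [IsScalarTower.algebraMap_eq R A F]
    exact h2
  have hβK : IsIntegral K β := hβint.tower_top
  -- the polynomial f
  set f : Polynomial R := (minpoly k α).map (algebraMap k R) with hfdef
  have hfmonic : f.Monic := (minpoly.monic hαint).map _
  have hfsep : f.Separable := Polynomial.Separable.map (Algebra.IsSeparable.isSeparable k α)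
  have hfroot : Polynomial.aeval β f = 0 := by
    have h1 : (algebraMap R F).comp (algebraMap k R) = ψ.comp (algebraMap k k₁) :=
      RingHom.ext fun e => (hcompatF e).symm
    show Polynomial.eval₂ (algebraMap R F) β f = 0
    rw [hfdef, Polynomial.eval₂_map, h1, ← Polynomial.hom_eval₂]
    rw [show Polynomial.eval₂ (algebraMap k k₁) α (minpoly k α) = 0 from minpoly.aeval k α,
      map_zero]
  -- ψ of elements of T lies in R[β]
  have hsubset : ∀ c ∈ (T : Set k₁), ψ c ∈ Algebra.adjoin R {β} := by
    intro c hcT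
    obtain ⟨p, hp⟩ := hpoly c hcT
    have h1 : (algebraMap R F).comp (algebraMap k R) = ψ.comp (algebraMap k k₁) :=
      RingHom.ext fun e => (hcompatF e).symm
    have : ψ c = Polynomial.aeval β (p.map (algebraMap k R)) := by
      rw [← hp]
      show ψ (Polynomial.eval₂ (algebraMap k k₁) α p) =
        Polynomial.eval₂ (algebraMap R F) β (p.map (algebraMap k R))
      rw [Polynomial.eval₂_map, h1, ← Polynomial.hom_eval₂]
    rw [this, Algebra.adjoin_singleton_eq_range_aeval]
    exact ⟨p.map (algebraMap k R), rfl⟩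
  have hadj : ∀ (T' : Finset k₁), (T' : Set k₁) ⊆ (T : Set k₁) →
      Algebra.adjoin R (ψ '' (T' : Set k₁)) ≤ Algebra.adjoin R {β} := by
    intro T' hT'
    apply Algebra.adjoin_le
    rintro _ ⟨c, hcT', rfl⟩
    exact hsubset c (hT' hcT')
  have hTl : (Ts : Set k₁) ⊆ (T : Set k₁) := by
    rw [hTdef]
    intro e he
    simp only [Finset.coe_union, Set.mem_union]
    exact Or.inl he
  have hTr : (Tt : Set k₁) ⊆ (T : Set k₁) := by
    rw [hTdef]
    intro e he
    simp only [Finset.coe_union, Set.mem_union]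
    exact Or.inr he
  have hsadj : θ s ∈ Algebra.adjoin R {β} := hadj Ts hTl hTs
  have htadj : θ t ∈ Algebra.adjoin R {β} := hadj Tt hTr hTt
  -- x lies in K(β)
  have hRKβ : Algebra.adjoin R {β} ≤
      (IntermediateField.adjoin K {β}).toSubalgebra.restrictScalars R := by
    apply Algebra.adjoin_le
    intro e he
    rw [Set.mem_singleton_iff] at he
    subst he
    show β ∈ IntermediateField.adjoin K {β}
    exact IntermediateField.mem_adjoin_simple_self K β
  have hxL : x ∈ IntermediateField.adjoin K {β} := by
    have hsa : θ s = algebraMap A F a := by rw [hθdef, ← hs]; rfl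
    have hta : θ t = algebraMap A F b := by rw [hθdef, ← ht]; rfl
    have h1 : algebraMap A F a ∈ IntermediateField.adjoin K {β} := by
      rw [← hsa]; exact hRKβ hsadj
    have h2 : algebraMap A F b ∈ IntermediateField.adjoin K {β} := by
      rw [← hta]; exact hRKβ htadj
    rw [← hxeq]
    exact div_mem h1 h2
  -- move to the intermediate field L := K⟮β⟯
  set L := IntermediateField.adjoin K {β} with hLdef
  letI : Algebra R L := ((algebraMap K L).comp (algebraMap R K)).toAlgebra
  haveI : IsScalarTower R K L := IsScalarTower.of_algebraMap_eq fun r => rfl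
  haveI : FiniteDimensional K L := IntermediateField.adjoin.finiteDimensional hβK
  have hβsep : IsSeparable K β := by
    have hfKsep : (f.map (algebraMap R K)).Separable := hfsep.map
    have hdvd : minpoly K β ∣ f.map (algebraMap R K) :=
      minpoly.dvd K β (by rw [Polynomial.aeval_map_algebraMap]; exact hfroot)
    exact hfKsep.of_dvd hdvd
  haveI : Algebra.IsSeparable K L :=
    (IntermediateField.isSeparable_adjoin_simple_iff_isSeparable K F).mpr hβsep
  set ι : L →ₐ[R] F := (IntermediateField.val L).restrictScalars R with hιdef
  have hιinj : Function.Injective ι := Subtype.coe_injective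
  set βL : L := IntermediateField.AdjoinSimple.gen K β with hβLdef
  have hιβL : ι βL = β := rfl
  have hβLtop : Algebra.adjoin K {βL} = ⊤ := by
    have := (IntermediateField.adjoin.powerBasis hβK).adjoin_gen_eq_top
    rwa [IntermediateField.adjoin.powerBasis_gen] at this
  have hβLint : IsIntegral R βL := by
    rw [← isIntegral_algHom_iff ι hιinj, hιβL]
    exact hβint
  have hβLroot : Polynomial.aeval βL f = 0 := by
    apply hιinj
    rw [map_zero, ← Polynomial.aeval_algHom_apply, hιβL]
    exact hfroot
  set zL : L := ⟨x, hxL⟩ with hzLdef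
  have hzLint : IsIntegral R zL := by
    rw [← isIntegral_algHom_iff ι hιinj]
    exact hxR
  have hcore := aux_mem_adjoin_of_isIntegral hβLtop hβLint hfmonic hfsep hβLroot hzLint
  -- push back to F
  have hxadj : x ∈ Algebra.adjoin R {β} := by
    have hcm : zL ∈ (Algebra.adjoin R {β}).comap ι := by
      have : Algebra.adjoin R {βL} ≤ (Algebra.adjoin R {β}).comap ι := by
        apply Algebra.adjoin_le
        intro e he
        rw [Set.mem_singleton_iff] at he
        subst he
        show ι βL ∈ Algebra.adjoin R {β}
        rw [hιβL]
        exact Algebra.subset_adjoin rfl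
      exact this hcore
    exact hcm
  -- finally, R[β] lies in the image of A
  have hfinal : Algebra.adjoin R {β} ≤ (IsScalarTower.toAlgHom R A F).range := by
    apply Algebra.adjoin_le
    intro e he
    rw [Set.mem_singleton_iff] at he
    subst he
    exact ⟨χ α, rfl⟩
  obtain ⟨y, hy⟩ := hfinal hxadj
  exact ⟨y, hy⟩
end

section
/- Let p be a prime, let S be a commutative ring of characteristic p, and let S' be a subring of S such that for every b ∈ S there exists a natural number n with b^{p^n} ∈ S'. Then the contraction map P ↦ P ∩ S' is an inclusion-preserving bijection from the set of prime ideals of S onto the set of prime ideals of S'; its inverse sends a prime ideal q of S' to the prime ideal {b ∈ S | ∃ n, b^{p^n} ∈ q} of S. -/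
section Aux

variable {p : ℕ} {S : Type*} [CommRing S] {S' : Subring S}

/-- lift a `q`-membership witness to a larger Frobenius power. -/
lemma radAux_mono (hp : p.Prime) (q : Ideal S') {b : S} {n m : ℕ} (hnm : n ≤ m)
    (h : b ^ p ^ n ∈ S') (hq : (⟨b ^ p ^ n, h⟩ : S') ∈ q) :
    ∃ h' : b ^ p ^ m ∈ S', (⟨b ^ p ^ m, h'⟩ : S') ∈ q := by
  have hb : b ^ p ^ m = (b ^ p ^ n) ^ p ^ (m - n) := by
    rw [← pow_mul, ← pow_add, Nat.add_sub_cancel' hnm]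
  have h' : b ^ p ^ m ∈ S' := hb ▸ pow_mem h _
  refine ⟨h', ?_⟩
  have hmem := q.pow_mem_of_mem hq (p ^ (m - n)) (pow_pos hp.pos _)
  convert hmem using 1
  exact Subtype.ext (by push_cast; exact hb)

/-- The inverse image ideal `{b : S | ∃ n, b ^ p ^ n ∈ q}`. -/
def radIdeal (hp : p.Prime) [CharP S p]
    (hpow : ∀ b : S, ∃ n : ℕ, b ^ p ^ n ∈ S') (q : Ideal S') : Ideal S where
  carrier := {b : S | ∃ n : ℕ, ∃ h : b ^ p ^ n ∈ S', (⟨b ^ p ^ n, h⟩ : S') ∈ q}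
  zero_mem' := by
    refine ⟨1, by simpa [hp.pos.ne'] using S'.zero_mem, ?_⟩
    convert q.zero_mem
    simp [hp.pos.ne']
  add_mem' := by
    rintro a b ⟨n, hn, hqn⟩ ⟨m, hm, hqm⟩
    haveI : Fact p.Prime := ⟨hp⟩
    obtain ⟨hn', hqn'⟩ := radAux_mono hp q (le_max_left n m) hn hqn
    obtain ⟨hm', hqm'⟩ := radAux_mono hp q (le_max_right n m) hm hqm
    have hab : (a + b) ^ p ^ (max n m) = a ^ p ^ (max n m) + b ^ p ^ (max n m) :=
      add_pow_char_pow ..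
    refine ⟨max n m, hab ▸ add_mem hn' hm', ?_⟩
    have := q.add_mem hqn' hqm'
    convert this using 1
    exact Subtype.ext (by push_cast; exact hab)
  smul_mem' := by
    rintro c b ⟨n, hn, hqn⟩
    obtain ⟨m, hm⟩ := hpow c
    set k := max n m with hk
    obtain ⟨hn', hqn'⟩ := radAux_mono hp q (le_max_left n m) hn hqn
    have hc : c ^ p ^ k = (c ^ p ^ m) ^ p ^ (k - m) := by
      rw [← pow_mul, ← pow_add, Nat.add_sub_cancel' (le_max_right n m)]
    have hc' : c ^ p ^ k ∈ S' := hc ▸ pow_mem hm _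
    have hcb : (c * b) ^ p ^ k = c ^ p ^ k * b ^ p ^ k := mul_pow ..
    refine ⟨k, by simpa [smul_eq_mul, hcb] using mul_mem hc' hn', ?_⟩
    have := q.mul_mem_left ⟨c ^ p ^ k, hc'⟩ hqn'
    convert this using 1
    exact Subtype.ext (by push_cast; simpa [smul_eq_mul] using hcb)

/-- Key lemma: a prime of `S` is recovered from its contraction. -/
lemma mem_prime_iff (hp : p.Prime) [CharP S p]
    (hpow : ∀ b : S, ∃ n : ℕ, b ^ p ^ n ∈ S') (P : Ideal S) (hP : P.IsPrime) (b : S) :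
    b ∈ P ↔ ∃ n : ℕ, ∃ h : b ^ p ^ n ∈ S',
      (⟨b ^ p ^ n, h⟩ : S') ∈ P.comap S'.subtype := by
  constructor
  · intro hb
    obtain ⟨n, hn⟩ := hpow b
    exact ⟨n, hn, P.pow_mem_of_mem hb _ (pow_pos hp.pos _)⟩
  · rintro ⟨n, hn, hq⟩
    exact hP.mem_of_pow_mem _ hq

lemma radIdeal_isPrime (hp : p.Prime) [CharP S p]
    (hpow : ∀ b : S, ∃ n : ℕ, b ^ p ^ n ∈ S') (q : Ideal S') (hq : q.IsPrime) :
    (radIdeal hp hpow q).IsPrime := by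
  constructor
  · intro h
    apply hq.ne_top
    rw [Ideal.eq_top_iff_one] at h ⊢
    obtain ⟨n, hn, h1⟩ := h
    convert h1 using 1
    exact Subtype.ext (by simp)
  · rintro a b ⟨n, hn, hqn⟩
    obtain ⟨ma, hma⟩ := hpow a
    obtain ⟨mb, hmb⟩ := hpow b
    set k := max n (max ma mb) with hk
    obtain ⟨hn', hqn'⟩ := radAux_mono hp q (le_max_left _ _) hn hqn
    have ha : a ^ p ^ k = (a ^ p ^ ma) ^ p ^ (k - ma) := by
      rw [← pow_mul, ← pow_add, Nat.add_sub_cancel' ((le_max_left ma mb).trans (le_max_right _ _))]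
    have hb : b ^ p ^ k = (b ^ p ^ mb) ^ p ^ (k - mb) := by
      rw [← pow_mul, ← pow_add, Nat.add_sub_cancel' ((le_max_right ma mb).trans (le_max_right _ _))]
    have ha' : a ^ p ^ k ∈ S' := ha ▸ pow_mem hma _
    have hb' : b ^ p ^ k ∈ S' := hb ▸ pow_mem hmb _
    have hmul : (⟨(a * b) ^ p ^ k, hn'⟩ : S') =
        (⟨a ^ p ^ k, ha'⟩ : S') * ⟨b ^ p ^ k, hb'⟩ := Subtype.ext (by push_cast; exact mul_pow ..)
    rw [hmul] at hqn'
    rcases hq.mem_or_mem hqn' with h | h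
    · exact Or.inl ⟨k, ha', h⟩
    · exact Or.inr ⟨k, hb', h⟩

lemma radIdeal_comap (hp : p.Prime) [CharP S p]
    (hpow : ∀ b : S, ∃ n : ℕ, b ^ p ^ n ∈ S') (q : Ideal S') (hq : q.IsPrime) :
    (radIdeal hp hpow q).comap S'.subtype = q := by
  ext x
  simp only [Ideal.mem_comap]
  constructor
  · rintro ⟨n, hn, hqn⟩
    have hx : (⟨S'.subtype x ^ p ^ n, hn⟩ : S') = x ^ p ^ n := Subtype.ext (by push_cast; rfl)
    rw [hx] at hqn
    exact hq.mem_of_pow_mem _ hqn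
  · intro hx
    refine ⟨0, by simp only [pow_zero, pow_one]; exact x.2, ?_⟩
    convert hx using 1
    exact Subtype.ext (by simp)

end Aux

/-- Let `p` be a prime, `S` a commutative ring of characteristic `p`,
and `S'` a subring of `S` such that every `b ∈ S` has some `p^n`-th power in `S'`.
Then `P ↦ P ∩ S'` is an inclusion-preserving bijection from the primes of `S` onto the
primes of `S'`, whose inverse sends a prime `q` of `S'` to `{b ∈ S | ∃ n, b ^ p ^ n ∈ q}`. -/
theorem prime_contraction_bijective_of_pow_mem
    (p : ℕ) (hp : p.Prime) (S : Type*) [CommRing S] [CharP S p]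
    (S' : Subring S) (hpow : ∀ b : S, ∃ n : ℕ, b ^ p ^ n ∈ S') :
    -- contraction preserves primality
    (∀ P : Ideal S, P.IsPrime → (P.comap S'.subtype).IsPrime) ∧
    -- contraction is inclusion-preserving and inclusion-reflecting (hence injective) on primes
    (∀ P₁ P₂ : Ideal S, P₁.IsPrime → P₂.IsPrime →
      (P₁.comap S'.subtype ≤ P₂.comap S'.subtype ↔ P₁ ≤ P₂)) ∧
    -- every prime of `S'` is the contraction of a unique prime of `S`, given by the
    -- explicit inverse formula
    (∀ q : Ideal S', q.IsPrime → ∃! P : Ideal S, P.IsPrime ∧ P.comap S'.subtype = q) ∧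
    (∀ q : Ideal S', q.IsPrime → ∀ P : Ideal S, P.IsPrime → P.comap S'.subtype = q →
      ∀ b : S, b ∈ P ↔ ∃ n : ℕ, ∃ h : b ^ p ^ n ∈ S', (⟨b ^ p ^ n, h⟩ : S') ∈ q) := by
  refine ⟨?_, ?_, ?_, ?_⟩
  · intro P hP
    exact hP.comap _
  · intro P₁ P₂ hP₁ hP₂
    constructor
    · intro h b hb
      obtain ⟨n, hn, hqn⟩ := (mem_prime_iff hp hpow P₁ hP₁ b).mp hb
      exact (mem_prime_iff hp hpow P₂ hP₂ b).mpr ⟨n, hn, h hqn⟩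
    · intro h
      exact Ideal.comap_mono h
  · intro q hq
    refine ⟨radIdeal hp hpow q, ⟨radIdeal_isPrime hp hpow q hq, radIdeal_comap hp hpow q hq⟩, ?_⟩
    rintro P ⟨hP, hPq⟩
    ext b
    rw [mem_prime_iff hp hpow P hP b, hPq]
    rfl
  · intro q hq P hP hPq b
    rw [mem_prime_iff hp hpow P hP b, hPq]
end

section
/- Let k be a field of prime characteristic p, let k₁ be a purely inseparable algebraic field extension of k, let R be a commutative k-algebra, and let S = k₁ ⊗_k R. If P₁ and P₂ are prime ideals of S whose contractions to R along the canonical map R → S, r ↦ 1 ⊗ r, coincide, then P₁ = P₂; that is, every prime ideal of S is uniquely determined by its contraction to R. -/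
open TensorProduct

/-- Let `k` be a field of prime characteristic `p`, `k₁` a purely
inseparable algebraic extension of `k`, `R` a commutative `k`-algebra and
`S = k₁ ⊗[k] R`.  Every prime ideal of `S` is uniquely determined by its contraction
to `R` along the canonical map `r ↦ 1 ⊗ r`. -/
theorem prime_eq_of_contraction_eq_of_purelyInseparable
    (k : Type*) [Field k] (p : ℕ) [Fact p.Prime] [CharP k p]
    (k₁ : Type*) [Field k₁] [Algebra k k₁] [IsPurelyInseparable k k₁]
    (R : Type*) [CommRing R] [Algebra k R]
    (P₁ P₂ : Ideal (k₁ ⊗[k] R)) (h₁ : P₁.IsPrime) (h₂ : P₂.IsPrime)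
    (hc : P₁.comap (Algebra.TensorProduct.includeRight : R →ₐ[k] k₁ ⊗[k] R).toRingHom =
          P₂.comap (Algebra.TensorProduct.includeRight : R →ₐ[k] k₁ ⊗[k] R).toRingHom) :
    P₁ = P₂ := by
  rcases subsingleton_or_nontrivial (k₁ ⊗[k] R) with hs | hs
  · ext x
    rw [Subsingleton.elim x 0]
    simp
  have hS : CharP (k₁ ⊗[k] R) p :=
    charP_of_injective_ringHom (algebraMap k (k₁ ⊗[k] R)).injective p
  -- key: every element has a p-power in the image of R
  have key : ∀ x : k₁ ⊗[k] R, ∃ (n : ℕ) (r : R), x ^ p ^ n = (1 : k₁) ⊗ₜ[k] r := by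
    intro x
    induction x using TensorProduct.induction_on with
    | zero => exact ⟨0, 0, by simp⟩
    | tmul c r =>
      obtain ⟨n, a, ha⟩ := IsPurelyInseparable.pow_mem k p c
      refine ⟨n, a • r ^ p ^ n, ?_⟩
      rw [Algebra.TensorProduct.tmul_pow, ← ha, Algebra.algebraMap_eq_smul_one,
        TensorProduct.smul_tmul]
    | add x y hx hy =>
      obtain ⟨n, r, hr⟩ := hx
      obtain ⟨m, s, hs'⟩ := hy
      refine ⟨n + m, r ^ p ^ m + s ^ p ^ n, ?_⟩
      have h1 : x ^ p ^ (n + m) = (1 : k₁) ⊗ₜ[k] (r ^ p ^ m) := by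
        rw [pow_add, pow_mul, hr, Algebra.TensorProduct.tmul_pow, one_pow]
      have h2 : y ^ p ^ (n + m) = (1 : k₁) ⊗ₜ[k] (s ^ p ^ n) := by
        rw [add_comm n m, pow_add, pow_mul, hs', Algebra.TensorProduct.tmul_pow, one_pow]
      rw [add_pow_char_pow, h1, h2, TensorProduct.tmul_add]
  have main : ∀ (Q₁ Q₂ : Ideal (k₁ ⊗[k] R)), Q₁.IsPrime → Q₂.IsPrime →
      Q₁.comap (Algebra.TensorProduct.includeRight : R →ₐ[k] k₁ ⊗[k] R).toRingHom =
        Q₂.comap (Algebra.TensorProduct.includeRight : R →ₐ[k] k₁ ⊗[k] R).toRingHom →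
      Q₁ ≤ Q₂ := by
    intro Q₁ Q₂ hQ₁ hQ₂ hcc x hx
    obtain ⟨n, r, hr⟩ := key x
    have hr1 : r ∈ Q₁.comap (Algebra.TensorProduct.includeRight : R →ₐ[k] k₁ ⊗[k] R).toRingHom := by
      show (1 : k₁) ⊗ₜ[k] r ∈ Q₁
      rw [← hr]
      exact Ideal.pow_mem_of_mem Q₁ hx _ (pow_pos (Fact.out : p.Prime).pos n)
    rw [hcc] at hr1
    have : x ^ p ^ n ∈ Q₂ := by rw [hr]; exact hr1
    exact hQ₂.mem_of_pow_mem _ this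
  exact le_antisymm (main P₁ P₂ h₁ h₂ hc) (main P₂ P₁ h₂ h₁ hc.symm)
end

section
/- Let R be an integral domain with field of fractions F, and let f ∈ R[T] be a monic polynomial of positive degree. Then the set of prime ideals of the quotient ring R[T]/(f) whose contraction to R along the canonical map R → R[T]/(f) is the zero ideal is finite, and its cardinality equals the number of distinct monic irreducible factors of f in F[T]. -/
open Polynomial

theorem polynomial_isLocalization {R : Type*} [CommRing R] (M : Submonoid R)
    (hM : M ≤ nonZeroDivisors R)
    (S : Type*) [CommRing S] [Algebra R S] [IsLocalization M S]
    [Algebra R[X] S[X]] (h : algebraMap R[X] S[X] = mapRingHom (algebraMap R S)) :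
    IsLocalization (M.map (C : R →+* R[X])) S[X] where
  map_units := by
    rintro ⟨p, q, hq, rfl⟩
    simp only [h, coe_mapRingHom, Polynomial.map_C]
    exact IsUnit.map (C : S →+* S[X]) (IsLocalization.map_units S ⟨q, hq⟩)
  surj z := by
    obtain ⟨b, hb⟩ := IsLocalization.integerNormalization_map_to_map M z
    refine ⟨⟨IsLocalization.integerNormalization M z,
      ⟨C (b : R), Submonoid.mem_map_of_mem C b.property⟩⟩, ?_⟩
    simp only [h, coe_mapRingHom, Polynomial.map_C, hb]
    rw [← algebraMap_smul S (b : R) z, Polynomial.smul_eq_C_mul, mul_comm]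
  exists_of_eq {p q} hpq := by
    refine ⟨1, ?_⟩
    have hinj : Function.Injective (algebraMap R S) := IsLocalization.injective S hM
    have : Function.Injective (algebraMap R[X] S[X]) := by
      rw [h, coe_mapRingHom]; exact Polynomial.map_injective _ hinj
    simp [this hpq]

/-- Let `R` be a domain with fraction field `F` and `f ∈ R[T]` monic
of positive degree.  The set of primes of `R[T]⧸(f)` contracting to `(0)` in `R` is
finite, of cardinality the number of distinct monic irreducible factors of `f` in
`F[T]`. -/
theorem card_primes_over_generic_fiber_eq_card_irreducible_factors
    (R : Type*) [CommRing R] [IsDomain R]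
    (f : R[X]) (hf : f.Monic) (hdeg : 0 < f.natDegree) :
    {P : Ideal (R[X] ⧸ Ideal.span {f}) | P.IsPrime ∧
        P.comap ((Ideal.Quotient.mk (Ideal.span {f})).comp (C : R →+* R[X])) = ⊥}.Finite ∧
    {P : Ideal (R[X] ⧸ Ideal.span {f}) | P.IsPrime ∧
        P.comap ((Ideal.Quotient.mk (Ideal.span {f})).comp (C : R →+* R[X])) = ⊥}.ncard =
      {g : (FractionRing R)[X] | g.Monic ∧ Irreducible g ∧
        g ∣ f.map (algebraMap R (FractionRing R))}.ncard := by
  classical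
  set F := FractionRing R
  letI : Algebra R[X] F[X] := (mapRingHom (algebraMap R F)).toAlgebra
  have halg : algebraMap R[X] F[X] = mapRingHom (algebraMap R F) := rfl
  set M : Submonoid R[X] := (nonZeroDivisors R).map (C : R →+* R[X]) with hM
  haveI hloc : IsLocalization M F[X] :=
    polynomial_isLocalization (nonZeroDivisors R) le_rfl F rfl
  set π : R[X] →+* R[X] ⧸ Ideal.span {f} := Ideal.Quotient.mk (Ideal.span {f}) with hπ
  set fF : F[X] := f.map (algebraMap R F) with hfFdef
  have hfF0 : fF ≠ 0 := (hf.map (algebraMap R F)).ne_zero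
  set A := {P : Ideal (R[X] ⧸ Ideal.span {f}) | P.IsPrime ∧
      P.comap (π.comp (C : R →+* R[X])) = ⊥} with hA
  set B := {g : F[X] | g.Monic ∧ Irreducible g ∧ g ∣ fF} with hB
  -- B is finite
  have hBfin : B.Finite := by
    apply Set.Finite.subset (UniqueFactorizationMonoid.normalizedFactors fF).toFinset.finite_toSet
    rintro g ⟨hm, hirr, hdvd⟩
    simp only [Finset.mem_coe, Multiset.mem_toFinset]
    obtain ⟨p, hp, hassoc⟩ :=
      UniqueFactorizationMonoid.exists_mem_normalizedFactors_of_dvd hfF0 hirr hdvd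
    have : g = p := by
      rw [← hm.normalize_eq_self, normalize_eq_normalize_iff.mpr ⟨hassoc.dvd, hassoc.symm.dvd⟩,
        UniqueFactorizationMonoid.normalize_normalized_factor p hp]
    rwa [this]
  -- the bijection
  set Φ : F[X] → Ideal (R[X] ⧸ Ideal.span {f}) :=
    fun g => ((Ideal.span {g}).comap (algebraMap R[X] F[X])).map π with hΦ
  have key : ∀ g ∈ B, Ideal.span {f} ≤ (Ideal.span {g}).comap (algebraMap R[X] F[X]) := by
    rintro g ⟨hm, hirr, hdvd⟩
    rw [Ideal.span_le, Set.singleton_subset_iff]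
    show algebraMap R[X] F[X] f ∈ Ideal.span {g}
    exact Ideal.mem_span_singleton.mpr (by rwa [halg, coe_mapRingHom])
  have hcomapQ : ∀ g ∈ B, ∀ r : R,
      (C r ∈ (Ideal.span {g}).comap (algebraMap R[X] F[X])) ↔ r = 0 := by
    rintro g ⟨hm, hirr, hdvd⟩ r
    constructor
    · intro hr
      by_contra hr0
      have : g ∣ Polynomial.C (algebraMap R F r) := by
        have := Ideal.mem_span_singleton.mp hr
        rwa [halg, coe_mapRingHom, Polynomial.map_C] at this
      have hu : IsUnit (Polynomial.C (algebraMap R F r)) := by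
        refine Polynomial.isUnit_C.mpr (isUnit_iff_ne_zero.mpr ?_)
        exact fun h0 => hr0 (IsFractionRing.injective R F (by simpa using h0))
      exact hirr.not_isUnit (isUnit_of_dvd_unit this hu)
    · rintro rfl; simp
  have hprimeQ : ∀ g ∈ B, ((Ideal.span {g}).comap (algebraMap R[X] F[X])).IsPrime := by
    rintro g hg
    obtain ⟨hm, hirr, hdvd⟩ := hg
    haveI : (Ideal.span {g} : Ideal F[X]).IsPrime :=
      (Ideal.span_singleton_prime hirr.ne_zero).mpr hirr.prime
    exact Ideal.IsPrime.comap _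
  have hmaps : ∀ g ∈ B, Φ g ∈ A := by
    intro g hg
    haveI hQp := hprimeQ g hg
    constructor
    · exact Ideal.map_isPrime_of_surjective Ideal.Quotient.mk_surjective
        (by rw [Ideal.mk_ker]; exact key g hg)
    · have hcm : Ideal.comap π (((Ideal.span {g}).comap (algebraMap R[X] F[X])).map π)
          = (Ideal.span {g}).comap (algebraMap R[X] F[X]) := by
        rw [Ideal.comap_map_of_surjective π Ideal.Quotient.mk_surjective,
          ← RingHom.ker_eq_comap_bot, Ideal.mk_ker, sup_eq_left]
        exact key g hg
      rw [hΦ]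
      ext r
      simp only [Ideal.mem_comap, RingHom.comp_apply, Ideal.mem_bot]
      rw [← Ideal.mem_comap, hcm]
      exact hcomapQ g hg r
  have hinj : Set.InjOn Φ B := by
    intro g1 hg1 g2 hg2 heq
    have h1 : (Φ g1).comap π = (Ideal.span {g1}).comap (algebraMap R[X] F[X]) := by
      rw [hΦ, Ideal.comap_map_of_surjective π Ideal.Quotient.mk_surjective,
        ← RingHom.ker_eq_comap_bot, Ideal.mk_ker, sup_eq_left]; exact key g1 hg1
    have h2 : (Φ g2).comap π = (Ideal.span {g2}).comap (algebraMap R[X] F[X]) := by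
      rw [hΦ, Ideal.comap_map_of_surjective π Ideal.Quotient.mk_surjective,
        ← RingHom.ker_eq_comap_bot, Ideal.mk_ker, sup_eq_left]; exact key g2 hg2
    have : (Ideal.span {g1} : Ideal F[X]) = Ideal.span {g2} := by
      rw [← IsLocalization.map_comap M F[X] (Ideal.span {g1}),
        ← IsLocalization.map_comap M F[X] (Ideal.span {g2})]
      unfold Ideal.under
      rw [← h1, ← h2, heq]
    exact Polynomial.eq_of_monic_of_associated hg1.1 hg2.1
      (Ideal.span_singleton_eq_span_singleton.mp this)
  have hsurj : Set.SurjOn Φ B A := by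
    rintro P ⟨hP, hP0⟩
    set Q := P.comap π with hQ
    haveI hQp : Q.IsPrime := Ideal.IsPrime.comap π
    have hdisj : Disjoint (M : Set R[X]) (Q : Set R[X]) := by
      rw [Set.disjoint_left]
      rintro p ⟨r, hr, rfl⟩ hpQ
      have : r ∈ P.comap (π.comp (C : R →+* R[X])) := hpQ
      rw [hP0] at this
      simp only [Ideal.mem_bot] at this
      subst this
      exact absurd rfl (nonZeroDivisors.ne_zero hr)
    set J := Q.map (algebraMap R[X] F[X]) with hJ
    haveI hJp : J.IsPrime := IsLocalization.isPrime_of_isPrime_disjoint M F[X] Q hQp hdisj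
    have hJQ : J.comap (algebraMap R[X] F[X]) = Q :=
      IsLocalization.comap_map_of_isPrime_disjoint M F[X] hQp hdisj
    have hfQ : f ∈ Q := by
      rw [hQ, Ideal.mem_comap]
      have hz : π f = 0 := Ideal.Quotient.eq_zero_iff_mem.mpr (Ideal.subset_span rfl)
      rw [hz]; exact P.zero_mem
    have hfJ : fF ∈ J := by
      have := Ideal.mem_map_of_mem (algebraMap R[X] F[X]) hfQ
      rwa [halg, coe_mapRingHom] at this
    have hJne : J ≠ ⊥ := fun h => hfF0 (by rwa [h, Ideal.mem_bot] at hfJ)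
    obtain ⟨g', hg'⟩ : ∃ g', J = Ideal.span {g'} :=
      ⟨Submodule.IsPrincipal.generator J, (Ideal.span_singleton_generator J).symm⟩
    have hg'0 : g' ≠ 0 := fun h =>
      hJne (by rw [hg', h, Ideal.span_singleton_eq_bot.mpr rfl])
    have hg'irr : Irreducible g' := by
      have := (Ideal.span_singleton_prime hg'0).mp (hg' ▸ hJp)
      exact this.irreducible
    set g := normalize g' with hgdef
    have hgg' : Associated g' g := (normalize_associated g').symm
    have hspan : Ideal.span {g} = Ideal.span {g'} :=
      Ideal.span_singleton_eq_span_singleton.mpr hgg'.symm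
    have hgB : g ∈ B := by
      refine ⟨Polynomial.monic_normalize hg'0, hgg'.irreducible hg'irr, ?_⟩
      rw [← Ideal.mem_span_singleton, hspan, ← hg']
      exact hfJ
    refine ⟨g, hgB, ?_⟩
    rw [hΦ]
    show ((Ideal.span {g}).comap (algebraMap R[X] F[X])).map π = P
    rw [hspan, ← hg', hJQ, hQ, Ideal.map_comap_of_surjective π Ideal.Quotient.mk_surjective]
  have hbij : Set.BijOn Φ B A := ⟨hmaps, hinj, hsurj⟩
  have hAeq : A = Φ '' B := (hbij.image_eq).symm
  constructor
  · rw [hAeq]; exact hBfin.image Φ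
  · rw [hAeq, Set.ncard_image_of_injOn hinj]
end

section
/- Let X be a nonempty compact topological space and let f : X → X be a continuous map. Then there exists a recurrent point for f, i.e., a point x ∈ X such that x lies in the closure of the set {f^n(x) | n ≥ 1} of its strictly forward iterates. -/
/-- Every continuous self-map of a nonempty compact topological space
has a recurrent point: a point `x` lying in the closure of its set of strictly forward
iterates `{f^n(x) | n ≥ 1}`. -/
theorem exists_recurrent_point
    (X : Type*) [TopologicalSpace X] [CompactSpace X] [Nonempty X]
    (f : X → X) (hf : Continuous f) :
    ∃ x : X, x ∈ closure {y : X | ∃ n : ℕ, 1 ≤ n ∧ f^[n] x = y} := by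
  set S : Set (Set X) := {K | K.Nonempty ∧ IsClosed K ∧ Set.MapsTo f K K} with hS
  have hchainlb : ∀ c ⊆ S, IsChain (· ⊆ ·) c → c.Nonempty →
      ∃ lb ∈ S, ∀ s ∈ c, lb ⊆ s := by
    intro c hcS hchain hcne
    refine ⟨⋂₀ c, ⟨?_, ?_, ?_⟩, fun s hs => Set.sInter_subset_of_mem hs⟩
    · haveI : Nonempty c := hcne.to_subtype
      rw [Set.sInter_eq_iInter]
      apply IsCompact.nonempty_iInter_of_directed_nonempty_isCompact_isClosed
      · rintro ⟨s, hsc⟩ ⟨t, htc⟩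
        rcases hchain.total hsc htc with h | h
        · exact ⟨⟨s, hsc⟩, le_refl _, h⟩
        · exact ⟨⟨t, htc⟩, h, le_refl _⟩
      · exact fun s => (hcS s.2).1
      · exact fun s => (hcS s.2).2.1.isCompact
      · exact fun s => (hcS s.2).2.1
    · exact isClosed_sInter fun s hs => (hcS hs).2.1
    · intro y hy
      exact fun s hs => (hcS hs).2.2 (hy s hs)
  obtain ⟨K, -, hKmin⟩ := zorn_superset_nonempty S hchainlb Set.univ
    ⟨Set.univ_nonempty, isClosed_univ, Set.mapsTo_univ f _⟩
  obtain ⟨hKne, hKcl, hKmap⟩ := hKmin.prop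
  obtain ⟨x, hx⟩ := hKne
  refine ⟨x, ?_⟩
  set O : Set X := closure {y : X | ∃ n : ℕ, 1 ≤ n ∧ f^[n] x = y} with hO
  have horb : {y : X | ∃ n : ℕ, 1 ≤ n ∧ f^[n] x = y} ⊆ K := by
    rintro y ⟨n, hn, rfl⟩
    induction n with
    | zero => exact hx
    | succ m ih =>
      rcases Nat.eq_zero_or_pos m with rfl | hm
      · simpa using hKmap hx
      · rw [Function.iterate_succ_apply']
        exact hKmap (ih hm)
  have hOK : O ⊆ K := closure_minimal horb hKcl
  have hOS : O ∈ S := by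
    refine ⟨⟨f x, subset_closure ⟨1, le_refl 1, rfl⟩⟩, isClosed_closure, ?_⟩
    intro y hy
    have : f y ∈ closure (f '' {y : X | ∃ n : ℕ, 1 ≤ n ∧ f^[n] x = y}) :=
      (hf.continuousOn.image_closure (Set.mem_image_of_mem f hy))
    refine closure_mono ?_ this
    rintro z ⟨w, ⟨n, hn, rfl⟩, rfl⟩
    exact ⟨n + 1, by omega, Function.iterate_succ_apply' f n x⟩
  have : O = K := hKmin.eq_of_subset hOS hOK
  exact this ▸ hx
end

section
/- Let Ω be a field with a ring automorphism σ, let K be a subfield of Ω with σ(K) = K, and let a = (a₁,…,a_r) be a tuple of elements of Ω. For n ≥ 0 set K_n = K(σ^i(a_j) : 0 ≤ i ≤ n, 1 ≤ j ≤ r), and assume each degree [K_{n+1} : K_n] is finite; the sequence ([K_{n+1} : K_n])_n is non-increasing, and its eventual constant value is the limit degree ld_σ(a/K). Suppose m is such that [K_{m+1} : K_m] = ld_σ(a/K), and let b be the tuple (σ^i(a_j) : 0 ≤ i ≤ m, 1 ≤ j ≤ r). Then ld_σ(b/K) = ld_σ(a/K), and for every ℓ ≥ 1 the limit degree of b over K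 with respect to σ^ℓ is attained at the first step: setting L_n = K(σ^{ℓ i}(b) : 0 ≤ i ≤ n), one has [L_{n+1} : L_n] = [L₁ : L₀] for all n ≥ 0. -/
set_option synthInstance.maxHeartbeats 1000000
set_option maxHeartbeats 2000000

/-- The degree `[E(E') : E]` of the subfield of `Ω` generated by `E'` over `E`;
for `E ≤ E'` this is the degree of the field extension `E ⊆ E'`.  (It is `0` when
this degree is infinite.) -/
noncomputable def sdeg {Ω : Type*} [Field Ω] (E E' : Subfield Ω) : ℕ :=
  Module.finrank E (IntermediateField.adjoin E (E' : Set Ω))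

/-- The subfield `K(σ^{ℓ i}(c_j) : 0 ≤ i ≤ n, j)` of `Ω`. -/
def seqField {Ω : Type*} [Field Ω] (σ : Ω ≃+* Ω) (K : Subfield Ω) {ι : Type*}
    (c : ι → Ω) (ℓ n : ℕ) : Subfield Ω :=
  Subfield.closure ((K : Set Ω) ∪ {x | ∃ j : ι, ∃ i : ℕ, i ≤ n ∧ x = (σ ^ (ℓ * i)) (c j)})

section Aux

open IntermediateField Module Cardinal

variable {Ω : Type*} [Field Ω]

lemma adjoin_subfield_eq (E F : Subfield Ω) :
    IntermediateField.adjoin E ((F : Set Ω)) = Subfield.extendScalars (le_sup_left : E ≤ E ⊔ F) := by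
  apply le_antisymm
  · exact IntermediateField.adjoin_le_iff.2 (by
      intro x hx
      exact (Subfield.mem_extendScalars _).2 ((le_sup_right : F ≤ E ⊔ F) hx))
  · rw [Subfield.extendScalars_le_iff]
    refine sup_le ?_ ?_
    · intro x hx
      exact (IntermediateField.adjoin E (F : Set Ω)).algebraMap_mem ⟨x, hx⟩
    · intro x hx
      exact IntermediateField.subset_adjoin _ _ hx

lemma sdeg_eq_relfinrank (E F : Subfield Ω) : sdeg E F = Subfield.relfinrank E (E ⊔ F) := by
  rw [Subfield.relfinrank_eq_finrank_of_le (le_sup_left : E ≤ E ⊔ F), sdeg, adjoin_subfield_eq]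

lemma if_adjoin_eq_extendScalars {k : Type*} [Field k] [Algebra k Ω]
    (A B : IntermediateField k Ω) :
    IntermediateField.adjoin A ((B : Set Ω)) =
      IntermediateField.extendScalars (le_sup_left : A ≤ A ⊔ B) := by
  apply IntermediateField.restrictScalars_injective k
  rw [IntermediateField.extendScalars_restrictScalars, IntermediateField.restrictScalars_adjoin,
    IntermediateField.adjoin_union, IntermediateField.adjoin_self, IntermediateField.adjoin_self]

lemma relrank_ne_zero (A B : Subfield Ω) : Subfield.relrank A B ≠ 0 := by
  rw [Subfield.relrank]
  exact rank_pos.ne'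

lemma relrank_sup_le_cardinal {D E F : Subfield Ω} (hDE : D ≤ E) (hDF : D ≤ F)
    (hfin : Subfield.relrank D F < ℵ₀) :
    Subfield.relrank E (E ⊔ F) ≤ Subfield.relrank D F := by
  set B := Subfield.extendScalars hDF with hBdef
  have hrB : Subfield.relrank D F = Module.rank D B := Subfield.relrank_eq_rank_of_le hDF
  have hfd : Module.Finite D B := by
    rw [hrB] at hfin
    exact Module.rank_lt_aleph0_iff.mp hfin
  have halg : Algebra.IsAlgebraic D B := Algebra.IsAlgebraic.of_finite _ _
  set A := Subfield.extendScalars hDE with hAdef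
  have key : Module.rank A (IntermediateField.adjoin A ((B : Set Ω))) ≤ Module.rank D B :=
    IntermediateField.adjoin_rank_le_of_isAlgebraic (E := A) B (Or.inr halg)
  rw [if_adjoin_eq_extendScalars, ← IntermediateField.relrank_eq_rank_of_le
    (le_sup_left : A ≤ A ⊔ B)] at key
  have h2 : IntermediateField.relrank A (A ⊔ B) = Subfield.relrank E (E ⊔ F) := by
    rw [IntermediateField.relrank, IntermediateField.sup_toSubfield,
      Subfield.extendScalars_toSubfield, Subfield.extendScalars_toSubfield]
  rw [h2, ← hrB] at key
  exact key

/-- Base change inequality: if `D ≤ E` then `[E ⊔ F : E] ≤ [D ⊔ F : D]`, and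
finiteness is preserved. -/
lemma relfinrank_sup_le_of_le {D E F : Subfield Ω} (hDE : D ≤ E)
    (hpos : 0 < Subfield.relfinrank D (D ⊔ F)) :
    0 < Subfield.relfinrank E (E ⊔ F) ∧
      Subfield.relfinrank E (E ⊔ F) ≤ Subfield.relfinrank D (D ⊔ F) := by
  have hfin : Subfield.relrank D (D ⊔ F) < ℵ₀ := by
    by_contra h
    push_neg at h
    rw [Subfield.relfinrank_eq_toNat_relrank, Cardinal.toNat_apply_of_aleph0_le h] at hpos
    exact lt_irrefl 0 hpos
  have key := relrank_sup_le_cardinal hDE (le_sup_left : D ≤ D ⊔ F) hfin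
  have habs : E ⊔ (D ⊔ F) = E ⊔ F := by rw [← sup_assoc, sup_eq_left.2 hDE]
  rw [habs] at key
  have hlt : Subfield.relrank E (E ⊔ F) < ℵ₀ := key.trans_lt hfin
  refine ⟨?_, ?_⟩
  · rw [Subfield.relfinrank_eq_toNat_relrank]
    exact Cardinal.toNat_pos.2 ⟨relrank_ne_zero _ _, hlt⟩
  · rw [Subfield.relfinrank_eq_toNat_relrank, Subfield.relfinrank_eq_toNat_relrank]
    exact Cardinal.toNat_le_toNat key hfin

variable (K : Subfield Ω)

/-- The subfield generated by `K` and a set `S`. -/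
def clK (S : Set Ω) : Subfield Ω := Subfield.closure ((K : Set Ω) ∪ S)

lemma seqField_eq_clK (σ : Ω ≃+* Ω) {ι : Type*} (c : ι → Ω) (ℓ n : ℕ) :
    seqField σ K c ℓ n = clK K {x | ∃ j : ι, ∃ i : ℕ, i ≤ n ∧ x = (σ ^ (ℓ * i)) (c j)} := rfl

lemma clK_mono {S T : Set Ω} (h : S ⊆ T) : clK K S ≤ clK K T :=
  Subfield.closure_mono (Set.union_subset_union_right _ h)

lemma clK_sup (S T : Set Ω) : clK K S ⊔ clK K T = clK K (S ∪ T) := by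
  rw [clK, clK, clK, ← Subfield.closure_union]
  congr 1
  ext x
  simp only [Set.mem_union]
  tauto

lemma subfield_map_closure (f : Ω →+* Ω) (X : Set Ω) :
    (Subfield.closure X).map f = Subfield.closure (f '' X) := by
  apply le_antisymm
  · rw [Subfield.map_le_iff_le_comap]
    apply Subfield.closure_le.2
    intro x hx
    exact Subfield.mem_comap.2 (Subfield.subset_closure ⟨x, hx, rfl⟩)
  · apply Subfield.closure_le.2
    rintro y ⟨x, hx, rfl⟩
    exact Subfield.mem_map.2 ⟨x, Subfield.subset_closure hx, rfl⟩

lemma clK_map (f : Ω →+* Ω) (hKf : K.map f = K) (S : Set Ω) :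
    (clK K S).map f = clK K (f '' S) := by
  rw [clK, subfield_map_closure, Set.image_union, clK]
  congr 2
  rw [← Subfield.coe_map, hKf]

end Aux

/-- Let `σ` be an automorphism of a field `Ω`, `K` a `σ`-stable
subfield, `a` a tuple in `Ω` with all degrees `[K_{n+1} : K_n]` finite, where
`K_n = K(σ^i(a_j) : 0 ≤ i ≤ n)`; let `ld` be the limit degree, i.e. the eventual
constant value of this non-increasing sequence of degrees.  If `m` is such that
`[K_{m+1} : K_m] = ld` and `b = (σ^i(a_j) : 0 ≤ i ≤ m, j)`, then `ld_σ(b/K) = ld`,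
and for every `ℓ ≥ 1` the limit degree of `b` over `K` with respect to `σ^ℓ` is
attained at the first step: `[L_{n+1} : L_n] = [L₁ : L₀]` for all `n`, where
`L_n = K(σ^{ℓ i}(b) : 0 ≤ i ≤ n)`. -/
theorem limit_degree_of_segment_tuple_attained_at_first_step
    (Ω : Type*) [Field Ω] (σ : Ω ≃+* Ω) (K : Subfield Ω)
    (hK : K.map (σ : Ω →+* Ω) = K)
    (r : ℕ) (a : Fin r → Ω)
    (d : ℕ → ℕ) (hd : ∀ n : ℕ, d n = sdeg (seqField σ K a 1 n) (seqField σ K a 1 (n + 1)))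
    (hfin : ∀ n : ℕ, 0 < d n)
    (ld : ℕ) (hld : ∃ N : ℕ, ∀ n ≥ N, d n = ld)
    (m : ℕ) (hm : d m = ld)
    (b : Fin r × Fin (m + 1) → Ω) (hb : ∀ (j : Fin r) (i : Fin (m + 1)), b (j, i) = (σ ^ (i : ℕ)) (a j))
    (db : ℕ → ℕ) (hdb : ∀ n : ℕ, db n = sdeg (seqField σ K b 1 n) (seqField σ K b 1 (n + 1)))
    (dL : ℕ → ℕ → ℕ)
    (hdL : ∀ ℓ n : ℕ, dL ℓ n = sdeg (seqField σ K b ℓ n) (seqField σ K b ℓ (n + 1))) :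
    (∃ N : ℕ, ∀ n ≥ N, db n = ld) ∧
    (∀ ℓ : ℕ, 1 ≤ ℓ → ∀ n : ℕ, dL ℓ n = dL ℓ 0) := by
  obtain ⟨N0, hN0⟩ := hld
  -- basic facts about powers of σ
  have hpow : ∀ (s t : ℕ) (x : Ω), (σ ^ s) ((σ ^ t) x) = (σ ^ (s + t)) x := by
    intro s t x
    rw [pow_add]
    rfl
  have hbapp : ∀ (j : Fin r) (i' : Fin (m + 1)) (s t : ℕ), s + (i' : ℕ) = t →
      (σ ^ s) (b (j, i')) = (σ ^ t) (a j) := by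
    intro j i' s t hst
    rw [hb, hpow, hst]
  set fpow : ℕ → (Ω →+* Ω) := fun s => ((σ ^ s : Ω ≃+* Ω) : Ω →+* Ω) with hfpowdef
  have hfpow_apply : ∀ (s : ℕ) (x : Ω), fpow s x = (σ ^ s) x := fun _ _ => rfl
  have hKs : ∀ s : ℕ, K.map (fpow s) = K := by
    intro s
    induction s with
    | zero =>
      ext x
      rw [Subfield.mem_map]
      constructor
      · rintro ⟨y, hy, rfl⟩
        have h0 : fpow 0 y = y := by rw [hfpow_apply, pow_zero]; rfl
        rw [h0]; exact hy
      · intro hx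
        refine ⟨x, hx, ?_⟩
        rw [hfpow_apply, pow_zero]; rfl
    | succ s ih =>
      have hcomp : (fpow s).comp (σ : Ω →+* Ω) = fpow (s + 1) := by
        ext x
        show fpow s (σ x) = fpow (s + 1) x
        rw [hfpow_apply, hfpow_apply]
        have h1 : σ x = (σ ^ 1) x := by rw [pow_one]
        rw [h1, hpow]
      rw [← hcomp, ← Subfield.map_map, hK, ih]
  -- windows of generators
  set W : ℕ → ℕ → Set Ω :=
    fun lo hi => {x | ∃ j : Fin r, ∃ t : ℕ, lo ≤ t ∧ t ≤ hi ∧ x = (σ ^ t) (a j)} with hWdef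
  have Wcongr : ∀ (lo lo' hi hi' : ℕ), lo = lo' → hi = hi' → W lo hi = W lo' hi' := by
    intro lo lo' hi hi' h1 h2
    rw [h1, h2]
  have W_mono : ∀ (lo hi lo' hi' : ℕ), lo' ≤ lo → hi ≤ hi' → W lo hi ⊆ W lo' hi' := by
    rintro lo hi lo' hi' h1 h2 x ⟨j, t, ht1, ht2, rfl⟩
    exact ⟨j, t, by omega, by omega, rfl⟩
  have W_union : ∀ (lo hi lo' hi' : ℕ), lo ≤ lo' → lo' ≤ hi + 1 → hi ≤ hi' →
      W lo hi ∪ W lo' hi' = W lo hi' := by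
    intro lo hi lo' hi' h1 h2 h3
    ext x
    constructor
    · rintro (⟨j, t, ht1, ht2, rfl⟩ | ⟨j, t, ht1, ht2, rfl⟩)
      · exact ⟨j, t, by omega, by omega, rfl⟩
      · exact ⟨j, t, by omega, by omega, rfl⟩
    · rintro ⟨j, t, ht1, ht2, rfl⟩
      by_cases ht : t ≤ hi
      · exact Or.inl ⟨j, t, ht1, ht, rfl⟩
      · exact Or.inr ⟨j, t, by omega, by omega, rfl⟩
  have W_image : ∀ (s lo hi : ℕ), (fpow s) '' W lo hi = W (s + lo) (s + hi) := by
    intro s lo hi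
    ext x
    constructor
    · rintro ⟨y, ⟨j, t, ht1, ht2, rfl⟩, rfl⟩
      refine ⟨j, s + t, by omega, by omega, ?_⟩
      rw [hfpow_apply, hpow]
    · rintro ⟨j, t, ht1, ht2, rfl⟩
      refine ⟨(σ ^ (t - s)) (a j), ⟨j, t - s, by omega, by omega, rfl⟩, ?_⟩
      rw [hfpow_apply, hpow, show s + (t - s) = t from by omega]
  -- the chain of fields generated by a
  set P : ℕ → Subfield Ω := fun u => clK K (W 0 u) with hPdef
  have hPa : ∀ n : ℕ, seqField σ K a 1 n = P n := by
    intro n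
    have hset : {x | ∃ j : Fin r, ∃ i : ℕ, i ≤ n ∧ x = (σ ^ (1 * i)) (a j)} = W 0 n := by
      ext x
      constructor
      · rintro ⟨j, i, hi, rfl⟩
        refine ⟨j, 1 * i, by omega, by omega, rfl⟩
      · rintro ⟨j, t, ht1, ht2, rfl⟩
        refine ⟨j, t, by omega, ?_⟩
        rw [one_mul]
    rw [seqField_eq_clK, hset]
  have hPmono : ∀ (u v : ℕ), u ≤ v → P u ≤ P v := by
    intro u v huv
    exact clK_mono K (W_mono 0 u 0 v (le_refl 0) huv)
  have hPmap : ∀ (s u : ℕ), (P u).map (fpow s) = clK K (W s (s + u)) := by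
    intro s u
    have h0 : P u = clK K (W 0 u) := rfl
    rw [h0, clK_map K _ (hKs s), W_image, Wcongr (s + 0) s (s + u) (s + u) (by omega) rfl]
  -- degrees in terms of relfinrank
  have hdP : ∀ n : ℕ, d n = Subfield.relfinrank (P n) (P (n + 1)) := by
    intro n
    rw [hd n, hPa, hPa, sdeg_eq_relfinrank, sup_eq_right.2 (hPmono n (n + 1) (by omega))]
  -- the sequence d is non-increasing
  have hmono : ∀ n : ℕ, d (n + 1) ≤ d n := by
    intro n
    set D : Subfield Ω := (P n).map (fpow 1) with hDdef
    set S : Subfield Ω := (P (n + 1)).map (fpow 1) with hSdef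
    have hD : D = clK K (W 1 (1 + n)) := by rw [hDdef, hPmap]
    have hS : S = clK K (W 1 (1 + (n + 1))) := by rw [hSdef, hPmap]
    have hDE : D ≤ P (n + 1) := by
      rw [hD]
      exact clK_mono K (W_mono 1 (1 + n) 0 (n + 1) (by omega) (by omega))
    have hDS : D ⊔ S = S := by
      rw [hD, hS]
      exact sup_eq_right.2 (clK_mono K (W_mono 1 (1 + n) 1 (1 + (n + 1)) (by omega) (by omega)))
    have hPn2 : P (n + 1) ⊔ S = P (n + 2) := by
      rw [hS]
      have h0 : P (n + 1) = clK K (W 0 (n + 1)) := rfl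
      have h1 : P (n + 2) = clK K (W 0 (n + 2)) := rfl
      rw [h0, h1, clK_sup, W_union 0 (n + 1) 1 (1 + (n + 1)) (by omega) (by omega) (by omega),
        Wcongr 0 0 (1 + (n + 1)) (n + 2) rfl (by omega)]
    have hrel : Subfield.relfinrank D (D ⊔ S) = d n := by
      rw [hDS, hDdef, hSdef, Subfield.relfinrank_map_map, ← hdP]
    have hposD : 0 < Subfield.relfinrank D (D ⊔ S) := by
      rw [hrel]; exact hfin n
    obtain ⟨_, hle⟩ := relfinrank_sup_le_of_le (F := S) hDE hposD
    rw [hrel, hPn2] at hle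
    calc d (n + 1) = Subfield.relfinrank (P (n + 1)) (P (n + 2)) := hdP (n + 1)
      _ ≤ d n := hle
  have hmono' : ∀ i j : ℕ, i ≤ j → d j ≤ d i := by
    intro i j
    induction j with
    | zero =>
      intro h
      have h0 : i = 0 := by omega
      subst h0
      exact le_refl _
    | succ j ih =>
      intro h
      rcases Nat.lt_or_ge i (j + 1) with h' | h'
      · exact (hmono j).trans (ih (by omega))
      · have h0 : i = j + 1 := by omega
        subst h0
        exact le_refl _
  have hge : ∀ n : ℕ, m ≤ n → d n = ld := by
    intro n hn
    apply le_antisymm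
    · rw [← hm]; exact hmono' m n hn
    · calc ld = d (max n N0) := (hN0 _ (le_max_right _ _)).symm
        _ ≤ d n := hmono' n _ (le_max_left _ _)
  have hldpos : 0 < ld := hm ▸ hfin m
  -- products of consecutive degrees
  have hprod : ∀ (s t : ℕ), m ≤ s → Subfield.relfinrank (P s) (P (s + t)) = ld ^ t := by
    intro s t hs
    induction t with
    | zero => simpa using Subfield.relfinrank_self (P s)
    | succ t ih =>
      have htow := Subfield.relfinrank_mul_relfinrank
        (hPmono s (s + t) (by omega)) (hPmono (s + t) (s + t + 1) (by omega))
      have hstep : Subfield.relfinrank (P (s + t)) (P (s + t + 1)) = ld := by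
        rw [← hdP (s + t)]
        exact hge (s + t) (by omega)
      rw [ih, hstep] at htow
      rw [pow_succ]
      exact htow.symm
  -- Part 1 : the b-chain with respect to σ is the shifted a-chain
  have hQb : ∀ n : ℕ, seqField σ K b 1 n = P (n + m) := by
    intro n
    have hset : {x | ∃ j : Fin r × Fin (m + 1), ∃ i : ℕ, i ≤ n ∧ x = (σ ^ (1 * i)) (b j)}
        = W 0 (n + m) := by
      ext x
      constructor
      · rintro ⟨⟨j, i'⟩, i, hi, rfl⟩
        refine ⟨j, 1 * i + (i' : ℕ), by omega, ?_, ?_⟩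
        · have := i'.isLt; omega
        · exact hbapp j i' (1 * i) (1 * i + (i' : ℕ)) rfl
      · rintro ⟨j, t, ht1, ht2, rfl⟩
        refine ⟨(j, ⟨min t m, by omega⟩), t - min t m, by omega, ?_⟩
        exact (hbapp j ⟨min t m, by omega⟩ (1 * (t - min t m)) t
          (show 1 * (t - min t m) + (min t m) = t from by omega)).symm
    rw [seqField_eq_clK, hset]
  have part1 : ∃ N : ℕ, ∀ n ≥ N, db n = ld := by
    refine ⟨N0, fun n hn => ?_⟩
    have hdbn : db n = d (n + m) := by
      rw [hdb n, hd (n + m), hQb n, hQb (n + 1), hPa, hPa,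
        show n + 1 + m = n + m + 1 from by omega]
    rw [hdbn]
    exact hN0 (n + m) (by omega)
  refine ⟨part1, ?_⟩
  -- Part 2
  intro ℓ hℓ
  -- block fields
  set Bl : ℕ → Subfield Ω := fun i => clK K (W (ℓ * i) (ℓ * i + m)) with hBldef
  set GB : ℕ → Set Ω :=
    fun n => {x | ∃ j : Fin r × Fin (m + 1), ∃ i : ℕ, i ≤ n ∧ x = (σ ^ (ℓ * i)) (b j)}
    with hGBdef
  set Q : ℕ → Subfield Ω := fun n => clK K (GB n) with hQdef
  have hQseq : ∀ n : ℕ, seqField σ K b ℓ n = Q n := fun n => rfl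
  have hGB0 : GB 0 = W 0 m := by
    ext x
    constructor
    · rintro ⟨⟨j, i'⟩, i, hi, rfl⟩
      have hi0 : i = 0 := by omega
      subst hi0
      refine ⟨j, ℓ * 0 + (i' : ℕ), by omega, ?_, ?_⟩
      · have := i'.isLt; omega
      · exact hbapp j i' (ℓ * 0) (ℓ * 0 + (i' : ℕ)) rfl
    · rintro ⟨j, t, ht1, ht2, rfl⟩
      refine ⟨(j, ⟨t, by omega⟩), 0, le_refl 0, ?_⟩
      exact (hbapp j ⟨t, by omega⟩ (ℓ * 0) t (show ℓ * 0 + t = t from by omega)).symm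
  have hGBsucc : ∀ n : ℕ, GB (n + 1) = GB n ∪ W (ℓ * (n + 1)) (ℓ * (n + 1) + m) := by
    intro n
    ext x
    constructor
    · rintro ⟨⟨j, i'⟩, i, hi, rfl⟩
      rcases Nat.lt_or_ge i (n + 1) with h | h
      · exact Or.inl ⟨(j, i'), i, by omega, rfl⟩
      · have h0 : i = n + 1 := by omega
        subst h0
        refine Or.inr ⟨j, ℓ * (n + 1) + (i' : ℕ), by omega, ?_, ?_⟩
        · have := i'.isLt; omega
        · exact hbapp j i' (ℓ * (n + 1)) (ℓ * (n + 1) + (i' : ℕ)) rfl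
    · rintro (⟨j, i, hi, rfl⟩ | ⟨j, t, ht1, ht2, rfl⟩)
      · exact ⟨j, i, by omega, rfl⟩
      · refine ⟨(j, ⟨t - ℓ * (n + 1), by omega⟩), n + 1, le_refl _, ?_⟩
        exact (hbapp j ⟨t - ℓ * (n + 1), by omega⟩ (ℓ * (n + 1)) t
          (show ℓ * (n + 1) + (t - ℓ * (n + 1)) = t from by omega)).symm
  have hGBsub : ∀ n : ℕ, GB n ⊆ W 0 (ℓ * n + m) := by
    rintro n x ⟨⟨j, i'⟩, i, hi, rfl⟩
    have hmul : ℓ * i ≤ ℓ * n := Nat.mul_le_mul_left ℓ hi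
    refine ⟨j, ℓ * i + (i' : ℕ), by omega, ?_, ?_⟩
    · have := i'.isLt; omega
    · exact hbapp j i' (ℓ * i) (ℓ * i + (i' : ℕ)) rfl
  -- basic relations between the fields
  have hQ0 : Q 0 = P m := by
    have h0 : Q 0 = clK K (GB 0) := rfl
    rw [h0, hGB0]
  have hQsucc : ∀ n : ℕ, Q (n + 1) = Q n ⊔ Bl (n + 1) := by
    intro n
    have h0 : Q (n + 1) = clK K (GB (n + 1)) := rfl
    have h1 : Q n = clK K (GB n) := rfl
    have h2 : Bl (n + 1) = clK K (W (ℓ * (n + 1)) (ℓ * (n + 1) + m)) := rfl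
    rw [h0, h1, h2, hGBsucc n, clK_sup]
  have hQmono : ∀ n : ℕ, Q n ≤ Q (n + 1) := by
    intro n
    rw [hQsucc n]
    exact le_sup_left
  have hBlQ : ∀ n : ℕ, Bl n ≤ Q n := by
    intro n
    have h0 : Bl n = clK K (W (ℓ * n) (ℓ * n + m)) := rfl
    have h1 : Q n = clK K (GB n) := rfl
    rw [h0, h1]
    apply clK_mono
    rintro x ⟨j, t, ht1, ht2, rfl⟩
    refine ⟨(j, ⟨t - ℓ * n, by omega⟩), n, le_refl n, ?_⟩
    exact (hbapp j ⟨t - ℓ * n, by omega⟩ (ℓ * n) t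
      (show ℓ * n + (t - ℓ * n) = t from by omega)).symm
  have hQP : ∀ n : ℕ, Q n ≤ P (ℓ * n + m) := by
    intro n
    exact clK_mono K (hGBsub n)
  have hBlP : ∀ n : ℕ, Bl n ≤ P (ℓ * n + m) := by
    intro n
    exact clK_mono K (W_mono (ℓ * n) (ℓ * n + m) 0 (ℓ * n + m) (by omega) (by omega))
  -- maps of blocks
  have hBl_map : ∀ i : ℕ, (P m).map (fpow (ℓ * i)) = Bl i := by
    intro i
    rw [hPmap (ℓ * i) m]
  have hBl1_map : ∀ k : ℕ, (P m ⊔ Bl 1).map (fpow (ℓ * k)) = Bl k ⊔ Bl (k + 1) := by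
    intro k
    rw [Subfield.map_sup, hBl_map k]
    congr 1
    have h0 : Bl 1 = clK K (W (ℓ * 1) (ℓ * 1 + m)) := rfl
    have h1 : Bl (k + 1) = clK K (W (ℓ * (k + 1)) (ℓ * (k + 1) + m)) := rfl
    rw [h0, h1, clK_map K _ (hKs (ℓ * k)), W_image,
      Wcongr (ℓ * k + ℓ * 1) (ℓ * (k + 1)) (ℓ * k + (ℓ * 1 + m)) (ℓ * (k + 1) + m)
        (by ring) (by ring)]
  have hWn_map : ∀ k : ℕ,
      (P (ℓ + m)).map (fpow (ℓ * k)) = clK K (W (ℓ * k) (ℓ * k + (ℓ + m))) := by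
    intro k
    rw [hPmap (ℓ * k) (ℓ + m)]
  -- the auxiliary quantities c and g
  set c : ℕ → ℕ :=
    fun k => Subfield.relfinrank (P (ℓ * k + m)) (P (ℓ * k + m) ⊔ Bl (k + 1)) with hcdef
  set g : ℕ → ℕ :=
    fun k => Subfield.relfinrank (P (ℓ * k + m) ⊔ Bl (k + 1)) (P (ℓ * (k + 1) + m)) with hgdef
  have hsubsup : ∀ k : ℕ, P (ℓ * k + m) ⊔ Bl (k + 1) ≤ P (ℓ * (k + 1) + m) := by
    intro k
    refine sup_le (hPmono _ _ ?_) ?_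
    · have : ℓ * k ≤ ℓ * (k + 1) := Nat.mul_le_mul_left ℓ (by omega)
      omega
    · exact hBlP (k + 1)
  have hcg : ∀ k : ℕ, c k * g k = ld ^ ℓ := by
    intro k
    have htow := Subfield.relfinrank_mul_relfinrank
      (le_sup_left : P (ℓ * k + m) ≤ P (ℓ * k + m) ⊔ Bl (k + 1)) (hsubsup k)
    have hc' : c k = Subfield.relfinrank (P (ℓ * k + m)) (P (ℓ * k + m) ⊔ Bl (k + 1)) := rfl
    have hg' : g k = Subfield.relfinrank (P (ℓ * k + m) ⊔ Bl (k + 1)) (P (ℓ * (k + 1) + m)) := rfl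
    rw [hc', hg', htow, show ℓ * (k + 1) + m = (ℓ * k + m) + ℓ from by ring,
      hprod (ℓ * k + m) ℓ (by omega)]
  have hldlpos : 0 < ld ^ ℓ := pow_pos hldpos ℓ
  have hcpos : ∀ k : ℕ, 0 < c k := by
    intro k
    rcases Nat.eq_zero_or_pos (c k) with h | h
    · exfalso; have := hcg k; rw [h, zero_mul] at this; omega
    · exact h
  have hgpos : ∀ k : ℕ, 0 < g k := by
    intro k
    rcases Nat.eq_zero_or_pos (g k) with h | h
    · exfalso; have := hcg k; rw [h, mul_zero] at this; omega
    · exact h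
  -- dL in terms of relfinrank
  have hdL' : ∀ k : ℕ, dL ℓ k = Subfield.relfinrank (Q k) (Q k ⊔ Bl (k + 1)) := by
    intro k
    rw [hdL ℓ k, hQseq, hQseq, sdeg_eq_relfinrank, sup_eq_right.2 (hQmono k), hQsucc k]
  have hc0c : c 0 = Subfield.relfinrank (P m) (P m ⊔ Bl 1) := by
    have h0 : c 0 = Subfield.relfinrank (P (ℓ * 0 + m)) (P (ℓ * 0 + m) ⊔ Bl (0 + 1)) := rfl
    rw [h0, show ℓ * 0 + m = m from by ring]
  have hdL0 : dL ℓ 0 = Subfield.relfinrank (P m) (P m ⊔ Bl 1) := by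
    rw [hdL' 0, hQ0]
  have hdL0c : dL ℓ 0 = c 0 := by rw [hdL0, hc0c]
  have hc0Bl : ∀ k : ℕ,
      Subfield.relfinrank (Bl k) (Bl k ⊔ Bl (k + 1))
        = Subfield.relfinrank (P m) (P m ⊔ Bl 1) := by
    intro k
    rw [← hBl1_map k, ← hBl_map k, Subfield.relfinrank_map_map]
  have hpos0 : 0 < Subfield.relfinrank (P m) (P m ⊔ Bl 1) := by
    rw [← hc0c]; exact hcpos 0
  have hup : ∀ k : ℕ, 0 < dL ℓ k ∧ dL ℓ k ≤ dL ℓ 0 := by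
    intro k
    have hpos : 0 < Subfield.relfinrank (Bl k) (Bl k ⊔ Bl (k + 1)) := by
      rw [hc0Bl k]; exact hpos0
    obtain ⟨h1, h2⟩ := relfinrank_sup_le_of_le (F := Bl (k + 1)) (hBlQ k) hpos
    constructor
    · rw [hdL' k]; exact h1
    · rw [hdL' k, hdL0, ← hc0Bl k]; exact h2
  have hlow : ∀ k : ℕ, c k ≤ dL ℓ k := by
    intro k
    have hpos : 0 < Subfield.relfinrank (Q k) (Q k ⊔ Bl (k + 1)) := by
      rw [← hdL' k]; exact (hup k).1
    obtain ⟨_, h2⟩ := relfinrank_sup_le_of_le (F := Bl (k + 1)) (hQP k) hpos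
    rw [hdL' k]
    exact h2
  have hgle : ∀ k : ℕ, g k ≤ g 0 := by
    intro k
    set Wn : Subfield Ω := clK K (W (ℓ * k) (ℓ * k + (ℓ + m))) with hWndef
    have hlk : ℓ * (k + 1) = ℓ * k + ℓ := by ring
    have hBlkWn : Bl k ≤ Wn := by
      have h0 : Bl k = clK K (W (ℓ * k) (ℓ * k + m)) := rfl
      rw [h0, hWndef]
      exact clK_mono K (W_mono _ _ _ _ (by omega) (by omega))
    have hBlk1Wn : Bl (k + 1) ≤ Wn := by
      have h0 : Bl (k + 1) = clK K (W (ℓ * (k + 1)) (ℓ * (k + 1) + m)) := rfl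
      rw [h0, hWndef]
      exact clK_mono K (W_mono _ _ _ _ (by omega) (by omega))
    have hDF : Bl k ⊔ Bl (k + 1) ≤ Wn := sup_le hBlkWn hBlk1Wn
    have hDE : Bl k ⊔ Bl (k + 1) ≤ P (ℓ * k + m) ⊔ Bl (k + 1) :=
      sup_le_sup_right (hBlP k) _
    have hg0' : g 0 = Subfield.relfinrank (P m ⊔ Bl 1) (P (ℓ + m)) := by
      have h0 : g 0 = Subfield.relfinrank (P (ℓ * 0 + m) ⊔ Bl (0 + 1)) (P (ℓ * (0 + 1) + m)) := rfl
      rw [h0, show ℓ * 0 + m = m from by ring, show ℓ * (0 + 1) + m = ℓ + m from by ring]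
    have hg0 : Subfield.relfinrank (Bl k ⊔ Bl (k + 1)) ((Bl k ⊔ Bl (k + 1)) ⊔ Wn) = g 0 := by
      rw [sup_eq_right.2 hDF, hWndef, ← hBl1_map k, ← hWn_map k, Subfield.relfinrank_map_map, hg0']
    have hposD : 0 < Subfield.relfinrank (Bl k ⊔ Bl (k + 1)) ((Bl k ⊔ Bl (k + 1)) ⊔ Wn) := by
      rw [hg0]; exact hgpos 0
    obtain ⟨_, h2⟩ := relfinrank_sup_le_of_le (F := Wn) hDE hposD
    rw [hg0] at h2
    have hEF : (P (ℓ * k + m) ⊔ Bl (k + 1)) ⊔ Wn = P (ℓ * (k + 1) + m) := by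
      rw [sup_assoc, sup_eq_right.2 hBlk1Wn]
      have h0 : P (ℓ * k + m) = clK K (W 0 (ℓ * k + m)) := rfl
      have h1 : P (ℓ * (k + 1) + m) = clK K (W 0 (ℓ * (k + 1) + m)) := rfl
      rw [h0, h1, hWndef, clK_sup, W_union 0 (ℓ * k + m) (ℓ * k) (ℓ * k + (ℓ + m))
        (by omega) (by omega) (by omega),
        Wcongr 0 0 (ℓ * k + (ℓ + m)) (ℓ * (k + 1) + m) rfl (by ring)]
    rw [hEF] at h2
    exact h2
  -- conclusion
  intro n
  have hcle : c n ≤ c 0 := (hlow n).trans ((hup n).2.trans_eq hdL0c)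
  have h1 : c n * g n = c 0 * g 0 := by rw [hcg n, hcg 0]
  have h2 : c n * g n ≤ c 0 * g n := mul_le_mul_left hcle (g n)
  have h3 : c 0 * g n ≤ c 0 * g 0 := mul_le_mul_right (hgle n) (c 0)
  have h4 : c n * g n = c 0 * g n := le_antisymm h2 (h3.trans_eq h1.symm)
  have hck : c n = c 0 := Nat.eq_of_mul_eq_mul_right (hgpos n) h4
  exact le_antisymm (hup n).2 (by rw [hdL0c, ← hck]; exact hlow n)
end

section
/- Let Ω be a field with a ring automorphism σ, let k be a subfield of Ω with σ(k) = k, and let a = (a₁,…,a_r) be a tuple of elements of Ω. If the subfields k(σ^i(a) : i ≤ 0) and k(σ^i(a) : i ≥ 0) of Ω are linearly disjoint over k(a), then for every integer m ≥ 1 the subfields k(σ^{mi}(a) : i ≤ 0) and k(σ^{mi}(a) : i ≥ 0) are linearly disjoint over k(a); that is, the condition for the automorphism σ implies the analogous condition for each power σ^m. -/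
set_option synthInstance.maxHeartbeats 1000000
set_option maxHeartbeats 2000000

/-- The subfield `k(σ^i(c_j) : i ∈ s, j)` of `Ω`, for a set `s` of integers. -/
def zSeqField {Ω : Type*} [Field Ω] (σ : Ω ≃+* Ω) (k : Subfield Ω) {ι : Type*}
    (c : ι → Ω) (s : Set ℤ) : Subfield Ω :=
  Subfield.closure ((k : Set Ω) ∪ {x | ∃ j : ι, ∃ i ∈ s, x = (σ ^ i) (c j)})

/-- Let `σ` be an automorphism of a field `Ω`, `k` a `σ`-stable
subfield and `a` a tuple in `Ω`.  If the subfields `k(σ^i(a) : i ≤ 0)` and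
`k(σ^i(a) : i ≥ 0)` are linearly disjoint over `k(a)`, then for every `m ≥ 1` the
subfields `k(σ^{m i}(a) : i ≤ 0)` and `k(σ^{m i}(a) : i ≥ 0)` are linearly disjoint
over `k(a)`. -/
theorem linearDisjoint_of_power_of_linearDisjoint
    (Ω : Type*) [Field Ω] (σ : Ω ≃+* Ω) (k : Subfield Ω)
    (hk : k.map (σ : Ω →+* Ω) = k)
    (r : ℕ) (a : Fin r → Ω)
    (E Fneg Fpos : Subfield Ω)
    (hE : E = zSeqField σ k a {0})
    (hFneg : Fneg = zSeqField σ k a {i : ℤ | i ≤ 0})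
    (hFpos : Fpos = zSeqField σ k a {i : ℤ | 0 ≤ i})
    (hdisj : (IntermediateField.adjoin E (Fneg : Set Ω)).LinearDisjoint
      (IntermediateField.adjoin E (Fpos : Set Ω))) :
    ∀ m : ℕ, 1 ≤ m →
      ∀ Fneg' Fpos' : Subfield Ω,
        Fneg' = zSeqField (σ ^ m) k a {i : ℤ | i ≤ 0} →
        Fpos' = zSeqField (σ ^ m) k a {i : ℤ | 0 ≤ i} →
        (IntermediateField.adjoin E (Fneg' : Set Ω)).LinearDisjoint
          (IntermediateField.adjoin E (Fpos' : Set Ω)) := by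
  intro m hm Fneg' Fpos' hFneg' hFpos'
  have key : ∀ i : ℤ, ((σ ^ m : Ω ≃+* Ω) ^ i) = σ ^ ((m : ℤ) * i) := by
    intro i
    rw [← zpow_natCast σ m, ← zpow_mul]
  have hneg : Fneg' ≤ Fneg := by
    rw [hFneg', hFneg]
    apply Subfield.closure_mono
    apply Set.union_subset_union_right
    rintro x ⟨j, i, hi, rfl⟩
    exact ⟨j, (m : ℤ) * i, mul_nonpos_of_nonneg_of_nonpos (Int.natCast_nonneg m) hi,
      by rw [key]⟩
  have hpos : Fpos' ≤ Fpos := by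
    rw [hFpos', hFpos]
    apply Subfield.closure_mono
    apply Set.union_subset_union_right
    rintro x ⟨j, i, hi, rfl⟩
    exact ⟨j, (m : ℤ) * i, mul_nonneg (Int.natCast_nonneg m) hi, by rw [key]⟩
  exact hdisj.of_le
    (IntermediateField.adjoin.mono _ _ _ hneg)
    (IntermediateField.adjoin.mono _ _ _ hpos)
end
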